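/- Let M ∈ ℕ, E = EuclideanSpace ℝ (Fin M), (Ω, ℱ, μ) a probability space, and 𝔪 ⊆ ℱ a sub-σ-algebra. Let W : E → ℝ be continuously differentiable, g : Ω → E Bochner integrable, and let b : Ω → E be an 𝔪-strongly-measurable version of the conditional expectation μ[g | 𝔪]. Fix a ∈ E and define c(u, v) = W(v) − W(u) + ⟨∇W(u), u − v⟩. Assume that W∘g, W∘b, ω ↦ ⟨∇W(b(ω)), g(ω)⟩ and ω ↦ ⟨∇W(b(ω)), b(ω)⟩ are μ-integrable. Then, μ-almost everywhere, μ[ ω ↦ c(a, g(ω)) − c(b(ω), g(ω)) | 𝔪 ] = (ω ↦ c(a, b(ω))). -/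

import Mathlib

open MeasureTheory
open scoped RealInnerProductSpace

section aux

variable {Ω : Type*} {m m0 : MeasurableSpace Ω} {μ : Measure Ω}
variable {E F : Type*} [NormedAddCommGroup E] [NormedSpace ℝ E] [CompleteSpace E]
  [NormedAddCommGroup F] [NormedSpace ℝ F] [CompleteSpace F]

lemma condexp_clm (hm : m ≤ m0) [IsFiniteMeasure μ] (T : E →L[ℝ] F)
    {f : Ω → E} (hf : Integrable f μ) :
    (fun ω => T ((μ[f|m]) ω)) =ᵐ[μ] μ[fun ω => T (f ω)|m] := by
  refine ae_eq_condExp_of_forall_setIntegral_eq hm (T.integrable_comp hf)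
    (fun s _ _ => (T.integrable_comp integrable_condExp).integrableOn)
    (fun s hs hμs => ?_)
    ((T.continuous.comp_stronglyMeasurable stronglyMeasurable_condExp).aestronglyMeasurable)
  rw [T.integral_comp_comm integrable_condExp.integrableOn,
    T.integral_comp_comm hf.integrableOn, setIntegral_condExp hm hf hs]

lemma euclidean_abs_apply_le {M : ℕ} (x : EuclideanSpace ℝ (Fin M)) (i : Fin M) :
    |x i| ≤ ‖x‖ := by
  rw [EuclideanSpace.norm_eq]
  calc |x i| = Real.sqrt (‖x i‖ ^ 2) := by
        rw [Real.sqrt_sq_eq_abs, Real.norm_eq_abs, abs_abs]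
    _ ≤ Real.sqrt (∑ j, ‖x j‖ ^ 2) := Real.sqrt_le_sqrt
        (Finset.single_le_sum (fun j _ => sq_nonneg ‖x j‖) (Finset.mem_univ i))

/-- Pull-out of a bounded `m`-measurable vector factor from a conditional expectation of an
inner product, coordinatewise. -/
lemma condexp_inner_pullout_bdd {M : ℕ} (hm : m ≤ m0) [IsFiniteMeasure μ]
    {h g b : Ω → EuclideanSpace ℝ (Fin M)} (hh : StronglyMeasurable[m] h)
    (hg : Integrable g μ) (hb : b =ᵐ[μ] μ[g|m])
    (C : ℝ) (hC : ∀ ω, ‖h ω‖ ≤ C) :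
    μ[fun ω => ⟪h ω, g ω⟫ | m] =ᵐ[μ] fun ω => ⟪h ω, b ω⟫ := by
  have hgi : ∀ i, Integrable (fun ω => g ω i) μ := fun i => by
    simpa using (EuclideanSpace.proj (𝕜 := ℝ) i).integrable_comp hg
  have hhi : ∀ i, StronglyMeasurable[m] (fun ω => h ω i) := fun i =>
    (EuclideanSpace.proj (𝕜 := ℝ) i).continuous.comp_stronglyMeasurable hh
  have hbd : ∀ (i : Fin M) ω, |h ω i| ≤ C := fun i ω =>
    (euclidean_abs_apply_le (h ω) i).trans (hC ω)
  have hprod : ∀ i, Integrable (fun ω => h ω i * g ω i) μ := fun i =>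
    (hgi i).bdd_mul ((hhi i).mono hm).aestronglyMeasurable
      (Filter.Eventually.of_forall fun ω => by simpa [Real.norm_eq_abs] using hbd i ω)
  have hsum : (fun ω => ⟪h ω, g ω⟫) = fun ω => ∑ i, h ω i * g ω i := by
    funext ω; simp [PiLp.inner_apply, RCLike.inner_apply, mul_comm]
  have hsumb : (fun ω => ⟪h ω, b ω⟫) = fun ω => ∑ i, h ω i * b ω i := by
    funext ω; simp [PiLp.inner_apply, RCLike.inner_apply, mul_comm]
  rw [hsum, hsumb]
  have hfun : (fun ω => ∑ i, h ω i * g ω i)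
      = ∑ i : Fin M, (fun ω => h ω i * g ω i) := by
    funext ω; simp
  rw [hfun]
  refine (condExp_finsetSum (fun i _ => hprod i) m).trans ?_
  have key : ∀ i : Fin M,
      μ[fun ω => h ω i * g ω i | m] =ᵐ[μ] fun ω => h ω i * b ω i := by
    intro i
    have h1 := condExp_stronglyMeasurable_mul_of_bound hm (hhi i) (hgi i) C
      (Filter.Eventually.of_forall (hbd i))
    have h3 := condexp_clm hm (EuclideanSpace.proj (𝕜 := ℝ) i) hg
    have h4 : (μ[fun ω => g ω i|m]) =ᵐ[μ] fun ω => b ω i := by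
      refine Filter.EventuallyEq.trans ?_ (h3.symm.trans ?_)
      · rfl
      · filter_upwards [hb] with ω hω
        simp [hω]
    refine h1.trans ?_
    filter_upwards [h4] with ω hω
    simp only [Pi.mul_apply, hω]
  have hall : ∀ᵐ ω ∂μ, ∀ i : Fin M, (μ[fun ω => h ω i * g ω i | m]) ω = h ω i * b ω i :=
    (MeasureTheory.ae_all_iff).2 key
  filter_upwards [hall] with ω hω
  simp only [Finset.sum_apply]
  exact Finset.sum_congr rfl fun i _ => hω i

/-- Pull-out of an `m`-measurable vector factor from a conditional expectation of an
inner product, by truncation. -/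
lemma condexp_inner_pullout {M : ℕ} (hm : m ≤ m0) [IsFiniteMeasure μ]
    {h g b : Ω → EuclideanSpace ℝ (Fin M)} (hh : StronglyMeasurable[m] h)
    (hg : Integrable g μ) (hb : b =ᵐ[μ] μ[g|m])
    (hint : Integrable (fun ω => ⟪h ω, g ω⟫) μ) :
    μ[fun ω => ⟪h ω, g ω⟫ | m] =ᵐ[μ] fun ω : Ω => ⟪h ω, b ω⟫ := by
  set A : ℕ → Set Ω := fun n => {ω | ‖h ω‖ ≤ (n : ℝ)} with hA_def
  have hA : ∀ n, MeasurableSet[m] (A n) := fun n =>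
    hh.norm.measurableSet_le (stronglyMeasurable_const : StronglyMeasurable[m] fun _ => (n : ℝ))
  have hhn : ∀ n : ℕ, StronglyMeasurable[m] ((A n).indicator h) := fun n =>
    hh.indicator (hA n)
  have hbnd : ∀ (n : ℕ) ω, ‖(A n).indicator h ω‖ ≤ (n : ℝ) := by
    intro n ω
    by_cases hω : ω ∈ A n
    · rw [Set.indicator_of_mem hω]; exact hω
    · rw [Set.indicator_of_notMem hω]; simp
  have hf : ∀ n : ℕ, StronglyMeasurable[m] ((A n).indicator (fun _ => (1 : ℝ))) := fun n =>
    stronglyMeasurable_const.indicator (hA n)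
  have hfbd : ∀ (n : ℕ) ω, |(A n).indicator (fun _ => (1 : ℝ)) ω| ≤ 1 := by
    intro n ω
    by_cases hω : ω ∈ A n
    · rw [Set.indicator_of_mem hω]; simp
    · rw [Set.indicator_of_notMem hω]; simp
  have hprod_eq : ∀ n : ℕ, ((A n).indicator (fun _ => (1 : ℝ)) * fun ω => ⟪h ω, g ω⟫)
      = fun ω => ⟪(A n).indicator h ω, g ω⟫ := by
    intro n
    funext ω
    by_cases hω : ω ∈ A n
    · simp [Set.indicator_of_mem hω]
    · simp [Set.indicator_of_notMem hω]
  have hprodb_eq : ∀ (n : ℕ) ω, ⟪(A n).indicator h ω, b ω⟫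
      = (A n).indicator (fun _ => (1 : ℝ)) ω * ⟪h ω, b ω⟫ := by
    intro n ω
    by_cases hω : ω ∈ A n
    · simp [Set.indicator_of_mem hω]
    · simp [Set.indicator_of_notMem hω]
  have step : ∀ n : ℕ, ((A n).indicator (fun _ => (1 : ℝ)) * μ[fun ω => ⟪h ω, g ω⟫|m])
      =ᵐ[μ] fun ω => (A n).indicator (fun _ => (1 : ℝ)) ω * ⟪h ω, b ω⟫ := by
    intro n
    have h1 := (condExp_stronglyMeasurable_mul_of_bound hm (hf n) hint 1
      (Filter.Eventually.of_forall (hfbd n))).symm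
    have h2 : μ[(A n).indicator (fun _ => (1 : ℝ)) * fun ω => ⟪h ω, g ω⟫|m]
        =ᵐ[μ] fun ω => ⟪(A n).indicator h ω, b ω⟫ := by
      rw [hprod_eq n]
      exact condexp_inner_pullout_bdd hm (hhn n) hg hb n (hbnd n)
    refine h1.trans (h2.trans ?_)
    exact Filter.Eventually.of_forall fun ω => hprodb_eq n ω
  have hall : ∀ᵐ ω ∂μ, ∀ n : ℕ,
      (A n).indicator (fun _ => (1 : ℝ)) ω * (μ[fun ω => ⟪h ω, g ω⟫|m]) ω
        = (A n).indicator (fun _ => (1 : ℝ)) ω * ⟪h ω, b ω⟫ :=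
    (MeasureTheory.ae_all_iff).2 fun n => step n
  filter_upwards [hall] with ω hω
  obtain ⟨n, hn⟩ := exists_nat_ge ‖h ω‖
  have hmem : ω ∈ A n := hn
  have := hω n
  rwa [Set.indicator_of_mem hmem, one_mul, one_mul] at this

end aux

/-- Conditional Bregman cost identity: if `b` is an `𝔪`-measurable version of the
conditional expectation `μ[g | 𝔪]`, then, a.e., the conditional expectation of the excess
Bregman cost of a fixed action `a` over that of `b` equals `c(a, b(ω))`. -/
theorem condexp_bregman_cost_identity
    {M : ℕ} {Ω : Type*} {ℱ : MeasurableSpace Ω}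
    (μ : Measure Ω) [IsProbabilityMeasure μ]
    (𝔪 : MeasurableSpace Ω) (h𝔪 : 𝔪 ≤ ℱ)
    (W : EuclideanSpace ℝ (Fin M) → ℝ) (hW : ContDiff ℝ 1 W)
    (g : Ω → EuclideanSpace ℝ (Fin M)) (hg : Integrable g μ)
    (b : Ω → EuclideanSpace ℝ (Fin M))
    (hbmeas : StronglyMeasurable[𝔪] b)
    (hb : b =ᵐ[μ] μ[g | 𝔪])
    (a : EuclideanSpace ℝ (Fin M))
    (c : EuclideanSpace ℝ (Fin M) → EuclideanSpace ℝ (Fin M) → ℝ)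
    (hc : ∀ u v, c u v = W v - W u + ⟪gradient W u, u - v⟫)
    (hint1 : Integrable (fun ω => W (g ω)) μ)
    (hint2 : Integrable (fun ω => W (b ω)) μ)
    (hint3 : Integrable (fun ω => ⟪gradient W (b ω), g ω⟫) μ)
    (hint4 : Integrable (fun ω => ⟪gradient W (b ω), b ω⟫) μ) :
    μ[fun ω => c a (g ω) - c (b ω) (g ω) | 𝔪] =ᵐ[μ] fun ω => c a (b ω) := by
  have hgrad_cont : Continuous (gradient W) := by
    have h1 : Continuous fun x => fderiv ℝ W x := hW.continuous_fderiv one_ne_zero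
    exact ((InnerProductSpace.toDual ℝ _).symm.continuous).comp h1
  have hWcont : Continuous W := hW.continuous
  have hhm : StronglyMeasurable[𝔪] fun ω => gradient W (b ω) :=
    hgrad_cont.comp_stronglyMeasurable hbmeas
  have hint5 : Integrable (fun ω => ⟪gradient W a, g ω⟫) μ := by
    simpa using (innerSL ℝ (gradient W a)).integrable_comp hg
  set φ : Ω → ℝ :=
    fun ω => W (b ω) - W a + ⟪gradient W a, a⟫ - ⟪gradient W (b ω), b ω⟫ with hφ_def
  set ψ : Ω → ℝ :=
    fun ω => ⟪gradient W (b ω), g ω⟫ - ⟪gradient W a, g ω⟫ with hψ_def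
  have hφmeas : StronglyMeasurable[𝔪] φ := by
    have sm1 : StronglyMeasurable[𝔪] fun ω => W (b ω) :=
      hWcont.comp_stronglyMeasurable hbmeas
    have sm2 : StronglyMeasurable[𝔪] fun ω => ⟪gradient W (b ω), b ω⟫ :=
      continuous_inner.comp_stronglyMeasurable (hhm.prodMk hbmeas)
    exact ((sm1.sub stronglyMeasurable_const).add stronglyMeasurable_const).sub sm2
  have hφint : Integrable φ μ :=
    ((hint2.sub (integrable_const _)).add (integrable_const _)).sub hint4
  have hψint : Integrable ψ μ := hint3.sub hint5
  have hdecomp : (fun ω => c a (g ω) - c (b ω) (g ω)) = fun ω => φ ω + ψ ω := by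
    funext ω
    simp only [hφ_def, hψ_def, hc, inner_sub_right]
    ring
  rw [hdecomp]
  have e2 : μ[fun ω => φ ω + ψ ω|𝔪] =ᵐ[μ] μ[φ|𝔪] + μ[ψ|𝔪] := condExp_add hφint hψint 𝔪
  have e3 : μ[φ|𝔪] = φ := condExp_of_stronglyMeasurable h𝔪 hφmeas hφint
  have e4a : μ[fun ω => ⟪gradient W (b ω), g ω⟫|𝔪]
      =ᵐ[μ] fun ω => ⟪gradient W (b ω), b ω⟫ :=
    condexp_inner_pullout h𝔪 hhm hg hb hint3
  have e4b : μ[fun ω => ⟪gradient W a, g ω⟫|𝔪] =ᵐ[μ] fun ω => ⟪gradient W a, b ω⟫ :=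
    condexp_inner_pullout_bdd h𝔪
      (stronglyMeasurable_const : StronglyMeasurable[𝔪] fun _ => gradient W a)
      hg hb ‖gradient W a‖ (fun _ => le_rfl)
  have e4 : μ[ψ|𝔪] =ᵐ[μ]
      fun ω => ⟪gradient W (b ω), b ω⟫ - ⟪gradient W a, b ω⟫ := by
    refine (condExp_sub hint3 hint5 𝔪).trans ?_
    filter_upwards [e4a, e4b] with ω h1 h2
    simp only [Pi.sub_apply, h1, h2]
  refine e2.trans ?_
  filter_upwards [e4] with ω hω
  rw [e3]
  simp only [Pi.add_apply, e3, hω, hφ_def]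
  rw [hc, inner_sub_right]
  ring
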